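/- arXiv:1211.6786 — 3 statements merged into one kernel-verified Lean document; each statement's English description precedes it below -/
import Mathlib

section
/- In a periodic parallel chip-firing game on a finite connected graph, every vertex fires the same number of times during one period: for all vertices v and w, Σ_{t=0}^{p−1} f(v,t) = Σ_{t=0}^{p−1} f(w,t), where p is the period. -/
open Finset

/-- `fire G c t v = 1` if vertex `v` fires at time `t`, i.e. has at least as
many chips as its degree, and `0` otherwise. -/
def fire {V : Type*} [Fintype V] (G : SimpleGraph V) [DecidableRel G.Adj]
    (c : ℕ → V → ℕ) (t : ℕ) (v : V) : ℕ :=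
  if G.degree v ≤ c t v then 1 else 0

/-- `c` is the sequence of chip configurations of a parallel chip-firing game on `G`. -/
def IsChipGame {V : Type*} [Fintype V] (G : SimpleGraph V) [DecidableRel G.Adj]
    (c : ℕ → V → ℕ) : Prop :=
  ∀ t v, c (t + 1) v + fire G c t v * G.degree v
      = c t v + ∑ w ∈ G.neighborFinset v, fire G c t w

/-- In a periodic parallel chip-firing game on a finite connected graph, every vertex
fires the same number of times during one period. -/
theorem equal_firing_counts {V : Type*} [Fintype V] (G : SimpleGraph V)
    [DecidableRel G.Adj] (hconn : G.Connected) (c : ℕ → V → ℕ)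
    (hgame : IsChipGame G c) (p : ℕ) (hp : 0 < p)
    (hper : ∀ t v, c (t + p) v = c t v) (v w : V) :
    ∑ t ∈ range p, fire G c t v = ∑ t ∈ range p, fire G c t w := by
  set F : V → ℕ := fun u => ∑ t ∈ range p, fire G c t u with hF
  have key : ∀ u, F u * G.degree u = ∑ x ∈ G.neighborFinset u, F x := by
    intro u
    have h1 : ∑ t ∈ range p, (c (t + 1) u + fire G c t u * G.degree u)
        = ∑ t ∈ range p, (c t u + ∑ x ∈ G.neighborFinset u, fire G c t x) :=
      Finset.sum_congr rfl fun t _ => hgame t u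
    rw [Finset.sum_add_distrib, Finset.sum_add_distrib, ← Finset.sum_mul,
      Finset.sum_comm] at h1
    have h2 : ∑ t ∈ range p, c (t + 1) u + c 0 u
        = ∑ t ∈ range p, c t u + c p u :=
      (Finset.sum_range_succ' (fun t => c t u) p).symm.trans
        (Finset.sum_range_succ (fun t => c t u) p)
    have hp0 : c p u = c 0 u := by
      have := hper 0 u; rwa [zero_add] at this
    rw [hp0] at h2
    have heq : ∑ t ∈ range p, c (t + 1) u = ∑ t ∈ range p, c t u :=
      Nat.add_right_cancel h2
    rw [heq] at h1
    exact Nat.add_left_cancel h1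
  obtain ⟨m, -, hm⟩ := Finset.exists_max_image (Finset.univ : Finset V) F
    ⟨v, Finset.mem_univ v⟩
  have step : ∀ u, F u = F m → ∀ x, G.Adj u x → F x = F m := by
    intro u hu x hx
    by_contra hne
    have hlt : F x < F m := lt_of_le_of_ne (hm x (Finset.mem_univ x)) hne
    have hsum : ∑ y ∈ G.neighborFinset u, F y < ∑ _y ∈ G.neighborFinset u, F m :=
      Finset.sum_lt_sum (fun y _ => hm y (Finset.mem_univ y))
        ⟨x, (G.mem_neighborFinset u x).mpr hx, hlt⟩
    rw [Finset.sum_const, G.card_neighborFinset_eq_degree, ← key u, hu,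
      smul_eq_mul, mul_comm] at hsum
    exact lt_irrefl _ hsum
  have walklem : ∀ {a b : V}, G.Walk a b → F a = F m → F b = F m := by
    intro a b wlk
    induction wlk with
    | nil => exact id
    | cons h q ih => intro ha; exact ih (step _ ha _ h)
  have hv : F v = F m := walklem (hconn m v).some rfl
  have hw : F w = F m := walklem (hconn m w).some rfl
  exact hv.trans hw.symm
end

section
/- Let σ be a periodic motorized parallel chip-firing game on a tree T with motor set M. For every vertex v, every f ∈ {0,1}, and every interval [a,b] with a < b such that v has firing value f at all times in [a,b], there exists a motor m ∈ M such that m has firing value f at all times in [a−D, b−D], where D is the distance from m to v. -/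
set_option linter.unusedSectionVars false


open Finset

/-- A motorized parallel chip-firing game on `G` with motor set `M`, indexed by
integer time. Chip counts are integers (motors may go negative); every vertex
either fires (`f t v = 1`) or waits (`f t v = 0`); non-motor vertices fire exactly
when they have at least as many chips as their degree; and chips evolve by the
usual parallel chip-firing update rule. -/
def MotorizedGame {V : Type*} [Fintype V] (G : SimpleGraph V) [DecidableRel G.Adj]
    (M : Set V) (c : ℤ → V → ℤ) (f : ℤ → V → ℕ) : Prop :=
  (∀ t v, f t v = 0 ∨ f t v = 1) ∧
  (∀ t v, v ∉ M → f t v = if (G.degree v : ℤ) ≤ c t v then 1 else 0) ∧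
  (∀ t v, c (t + 1) v
      = c t v + ∑ w ∈ G.neighborFinset v, (f t w : ℤ) - (f t v : ℤ) * G.degree v)

namespace ClumpProof

variable {V : Type*} [Fintype V] {G : SimpleGraph V} [DecidableRel G.Adj]
variable {M : Set V} {c : ℤ → V → ℤ} {f : ℤ → V → ℕ} {p : ℕ}

/-- periodic extension of the firing function -/
lemma fper (hperf : ∀ (t : ℤ) (v : V), f (t + p) v = f t v) :
    ∀ (q t : ℤ) (v : V), f (t + p * q) v = f t v := by
  intro q
  induction q using Int.induction_on with
  | zero => intro t v; simp
  | succ n ih =>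
      intro t v
      have h1 : t + (p : ℤ) * ((n : ℤ) + 1) = (t + p * n) + p := by ring
      rw [h1, hperf, ih]
  | pred n ih =>
      intro t v
      have h2 := hperf (t + (p : ℤ) * (-(n : ℤ) - 1)) v
      have h1 : t + (p : ℤ) * (-(n : ℤ) - 1) + (p : ℤ) = t + (p : ℤ) * (-(n : ℤ)) := by ring
      rw [h1] at h2
      rw [← h2]
      exact ih t v

/-- if a vertex fires during `p` consecutive times, it fires always -/
lemma f_of_interval (hperf : ∀ (t : ℤ) (v : V), f (t + p) v = f t v) (hp : 0 < p)
    {u : V} {T : ℤ} (h : ∀ i : ℕ, i < p → f (T + i) u = 1) : ∀ t, f t u = 1 := by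
  intro t
  have hp' : (0 : ℤ) < p := by exact_mod_cast hp
  set r : ℤ := (t - T) % p with hrdef
  have hr0 : 0 ≤ r := Int.emod_nonneg _ (by omega)
  have hrp : r < p := Int.emod_lt_of_pos _ hp'
  have hdiv : r + (p : ℤ) * ((t - T) / p) = t - T := Int.emod_add_mul_ediv _ _
  have ht : t = (T + r) + (p : ℤ) * ((t - T) / p) := by linarith
  have hiper := fper hperf ((t - T) / p) (T + r) u
  rw [ht, hiper]
  have hnat : ((r.toNat : ℕ) : ℤ) = r := Int.toNat_of_nonneg hr0
  have hlt : r.toNat < p := by omega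
  have := h r.toNat hlt
  rwa [hnat] at this

/-- telescoping the chip update rule -/
lemma c_teles (hgame : MotorizedGame G M c f) :
    ∀ (n : ℕ) (T : ℤ) (y : V), c (T + n) y
      = c T y + ∑ i ∈ Finset.range n,
          ((∑ w ∈ G.neighborFinset y, (f (T + i) w : ℤ)) - (f (T + i) y : ℤ) * G.degree y) := by
  intro n
  induction n with
  | zero => intro T y; simp
  | succ n ih =>
      intro T y
      have hc := hgame.2.2 (T + n) y
      have hcast : (T + ((n + 1 : ℕ) : ℤ)) = (T + (n : ℤ)) + 1 := by push_cast; ring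
      rw [hcast, hc, ih, Finset.sum_range_succ]
      ring

/-- the per-period firing counts satisfy a harmonicity relation -/
lemma harmonic (hgame : MotorizedGame G M c f)
    (hperc : ∀ (t : ℤ) (v : V), c (t + p) v = c t v) (T : ℤ) (y : V) :
    ∑ w ∈ G.neighborFinset y, (∑ i ∈ Finset.range p, (f (T + i) w : ℤ))
      = (G.degree y : ℤ) * ∑ i ∈ Finset.range p, (f (T + i) y : ℤ) := by
  have h0 := c_teles hgame p T y
  have h1 : c (T + (p : ℤ)) y = c T y := hperc T y
  rw [h1] at h0
  have h2 : ∑ i ∈ Finset.range p,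
      ((∑ w ∈ G.neighborFinset y, (f (T + i) w : ℤ)) - (f (T + i) y : ℤ) * G.degree y) = 0 := by
    linarith
  rw [Finset.sum_sub_distrib] at h2
  rw [Finset.sum_comm] at h2
  have h3 : ∑ i ∈ Finset.range p, (f (T + i) y : ℤ) * (G.degree y : ℤ)
      = (∑ i ∈ Finset.range p, (f (T + i) y : ℤ)) * (G.degree y : ℤ) := by
    rw [Finset.sum_mul]
  rw [h3] at h2
  linarith [mul_comm ((G.degree y : ℤ)) (∑ i ∈ Finset.range p, (f (T + i) y : ℤ))]

/-- If some vertex fires during `p` consecutive steps, every vertex fires at every time. -/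
lemma all_fire (htree : G.IsTree) (hgame : MotorizedGame G M c f) (hp : 0 < p)
    (hperc : ∀ (t : ℤ) (v : V), c (t + p) v = c t v)
    (hperf : ∀ (t : ℤ) (v : V), f (t + p) v = f t v)
    {T : ℤ} {u : V} (hu : ∀ i : ℕ, i < p → f (T + i) u = 1) :
    ∀ (z : V) (t : ℤ), f t z = 1 := by
  have hbin := hgame.1
  set R : V → ℤ := fun y => ∑ i ∈ Finset.range p, (f (T + i) y : ℤ) with hR
  have hterm : ∀ (y : V) (i : ℕ), (f (T + i) y : ℤ) ≤ 1 := by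
    intro y i; rcases hbin (T + i) y with h | h <;> simp [h]
  have hle : ∀ y, R y ≤ p := by
    intro y
    calc R y ≤ ∑ _i ∈ Finset.range p, (1 : ℤ) :=
          Finset.sum_le_sum (fun i _ => hterm y i)
      _ = p := by simp
  have hRu : R u = p := by
    have h1 : ∀ i ∈ Finset.range p, ((f (T + i) u : ℤ)) = 1 := by
      intro i hi; rw [hu i (Finset.mem_range.1 hi)]; norm_num
    have h2 : R u = ∑ i ∈ Finset.range p, ((f (T + i) u : ℤ)) := rfl
    rw [h2, Finset.sum_congr rfl h1]; simp
  have hstep : ∀ y w, R y = (p : ℤ) → G.Adj y w → R w = p := by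
    intro y w hy hyw
    by_contra hne
    have hwlt : R w < p := lt_of_le_of_ne (hle w) hne
    have h1 : ∑ w' ∈ G.neighborFinset y, R w' < ∑ _w' ∈ G.neighborFinset y, (p : ℤ) :=
      Finset.sum_lt_sum (fun i _ => hle i)
        ⟨w, by rwa [SimpleGraph.mem_neighborFinset], hwlt⟩
    have h2 : ∑ w' ∈ G.neighborFinset y, R w' = (G.degree y : ℤ) * R y :=
      harmonic hgame hperc T y
    rw [hy] at h2
    rw [Finset.sum_const, SimpleGraph.card_neighborFinset_eq_degree, nsmul_eq_mul] at h1
    rw [h2] at h1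
    exact lt_irrefl _ h1
  have haux : ∀ (y z : V), G.Walk y z → R y = p → R z = p := by
    intro y z w
    induction w with
    | nil => exact id
    | cons h q ih => intro hy; exact ih (hstep _ _ hy h)
  have hall : ∀ z, R z = p := by
    intro z
    obtain ⟨w⟩ := htree.isConnected.preconnected u z
    exact haux u z w hRu
  have hone : ∀ (z : V) (i : ℕ), i < p → f (T + i) z = 1 := by
    intro z i hi
    rcases hbin (T + i) z with h0 | h1
    · exfalso
      have hlt : R z < p := by
        have h1 : ∑ i ∈ Finset.range p, (f (T + i) z : ℤ) < ∑ _i ∈ Finset.range p, (1 : ℤ) :=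
          Finset.sum_lt_sum (fun j _ => hterm z j)
            ⟨i, Finset.mem_range.2 hi, by rw [h0]; norm_num⟩
        calc R z < ∑ _i ∈ Finset.range p, (1 : ℤ) := h1
          _ = p := by simp
      rw [hall z] at hlt; exact lt_irrefl _ hlt
    · exact h1
  intro z t
  exact f_of_interval hperf hp (hone z) t

/-- Key step lemma: a non-motor vertex firing throughout `[α,β]` has a neighbor
firing throughout `[α-1,β-1]`. -/
lemma step (htree : G.IsTree) (hM : M.Nonempty) (hgame : MotorizedGame G M c f) (hp : 0 < p)
    (hperc : ∀ (t : ℤ) (v : V), c (t + p) v = c t v)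
    (hperf : ∀ (t : ℤ) (v : V), f (t + p) v = f t v)
    {u : V} (hu : u ∉ M) {α β : ℤ} (hαβ : α < β)
    (hconst : ∀ t, α ≤ t → t ≤ β → f t u = 1) :
    ∃ w, G.Adj u w ∧ ∀ t, α - 1 ≤ t → t ≤ β - 1 → f t w = 1 := by
  have hbin := hgame.1
  have hrule := hgame.2.1
  by_cases hz : ∃ t : ℤ, t ≤ α ∧ f (t - 1) u = 0
  case neg =>
    push_neg at hz
    have hpre : ∀ s : ℤ, s ≤ α - 1 → f s u = 1 := by
      intro s hs
      rcases hbin s u with h | h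
      · exact absurd (by rw [show s = (s+1) - 1 by ring] at h; exact h) (hz (s+1) (by omega))
      · exact h
    have hall1 : ∀ t, f t u = 1 := by
      intro t
      set q : ℤ := min (α - 1 - t) 0 with hq
      have hq0 : q ≤ 0 := min_le_right _ _
      have hpq : (p : ℤ) * q ≤ 1 * q := by
        apply mul_le_mul_of_nonpos_right _ hq0
        exact_mod_cast hp
      have h1 : t + (p : ℤ) * q ≤ α - 1 := by
        have : q ≤ α - 1 - t := min_le_left _ _
        omega
      have := fper hperf q t u
      rw [← this]
      exact hpre _ h1
    have hall := all_fire htree hgame hp hperc hperf (T := (0:ℤ)) (u := u)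
      (fun i _ => hall1 _)
    obtain ⟨m, hm⟩ := hM
    have hne : m ≠ u := fun h => hu (h ▸ hm)
    obtain ⟨wlk⟩ := htree.isConnected.preconnected u m
    cases wlk with
    | nil => exact absurd rfl hne
    | @cons _ w _ h q => exact ⟨w, h, fun t _ _ => hall w t⟩
  case pos =>
    obtain ⟨A, ⟨hAα, hA0⟩, hAmax⟩ :=
      Int.exists_greatest_of_bdd (P := fun z => z ≤ α ∧ f (z - 1) u = 0)
        ⟨α, fun z hz => hz.1⟩ hz
    have hA1 : ∀ t, A ≤ t → t ≤ β → f t u = 1 := by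
      intro t h1 h2
      rcases le_or_gt α t with h | h
      · exact hconst t h h2
      · rcases hbin t u with h0 | h0
        · exfalso
          have := hAmax (t + 1) ⟨by omega, by rw [show t + 1 - 1 = t by ring]; exact h0⟩
          omega
        · exact h0
    set d : ℤ := (G.degree u : ℤ) with hd
    have hfire : ∀ t, f t u = 1 → d ≤ c t u := by
      intro t h
      have hr := hrule t u hu
      rw [h] at hr
      by_contra hlt
      rw [if_neg hlt] at hr
      exact one_ne_zero hr
    have hwait : c (A - 1) u ≤ d - 1 := by
      have hr := hrule (A - 1) u hu
      rw [hA0] at hr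
      by_cases hc : d ≤ c (A - 1) u
      · rw [if_pos hc] at hr; exact absurd hr.symm one_ne_zero
      · omega
    have hAβ : A ≤ β := le_trans hAα (le_of_lt hαβ)
    set n : ℕ := (β - A).toNat with hn
    have hnz : (n : ℤ) = β - A := Int.toNat_of_nonneg (by omega)
    have hT := c_teles hgame (n + 1) (A - 1) u
    have hend : A - 1 + ((n + 1 : ℕ) : ℤ) = β := by push_cast; omega
    rw [hend] at hT
    -- the sum of firing values of u over the window is n
    have hfsum : ∑ i ∈ Finset.range (n + 1), (f (A - 1 + i) u : ℤ) = n := by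
      rw [Finset.sum_range_succ']
      have h0 : ((f (A - 1 + ((0:ℕ):ℤ)) u : ℤ)) = 0 := by
        norm_num [hA0]
      have h1 : ∀ i ∈ Finset.range n, ((f (A - 1 + ((i+1 : ℕ):ℤ)) u : ℤ)) = 1 := by
        intro i hi
        have hi' := Finset.mem_range.1 hi
        have : A - 1 + ((i + 1 : ℕ) : ℤ) = A + i := by push_cast; ring
        rw [this, hA1 (A + i) (by omega) (by omega)]
        norm_num
      rw [Finset.sum_congr rfl h1, h0]
      simp
    by_contra hcon
    push_neg at hcon
    have hmiss : ∀ w ∈ G.neighborFinset u, ∃ t, α - 1 ≤ t ∧ t ≤ β - 1 ∧ f t w = 0 := by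
      intro w hw
      obtain ⟨t, ht1, ht2, ht3⟩ := hcon w ((SimpleGraph.mem_neighborFinset _ _ _).1 hw)
      rcases hbin t w with h | h
      · exact ⟨t, ht1, ht2, h⟩
      · exact absurd h ht3
    -- bound the double sum
    have hIle : ∑ i ∈ Finset.range (n + 1),
        (∑ w ∈ G.neighborFinset u, (f (A - 1 + i) w : ℤ)) ≤ n * d := by
      rw [Finset.sum_comm]
      have hper : ∀ w ∈ G.neighborFinset u,
          ∑ i ∈ Finset.range (n + 1), (f (A - 1 + i) w : ℤ) ≤ n := by
        intro w hw
        obtain ⟨t, ht1, ht2, ht0⟩ := hmiss w hw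
        have hi0 : (t - (A - 1)).toNat ∈ Finset.range (n + 1) := by
          rw [Finset.mem_range]; omega
        have hival : A - 1 + ((t - (A - 1)).toNat : ℤ) = t := by omega
        have hlt : ∑ i ∈ Finset.range (n + 1), (f (A - 1 + i) w : ℤ)
            < ∑ _i ∈ Finset.range (n + 1), (1 : ℤ) := by
          apply Finset.sum_lt_sum
          · intro i _; rcases hbin (A - 1 + i) w with h | h <;> simp [h]
          · exact ⟨(t - (A - 1)).toNat, hi0, by rw [hival, ht0]; norm_num⟩
        have : ∑ _i ∈ Finset.range (n + 1), (1 : ℤ) = (n : ℤ) + 1 := by simp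
        omega
      calc ∑ w ∈ G.neighborFinset u, ∑ i ∈ Finset.range (n + 1), (f (A - 1 + i) w : ℤ)
          ≤ ∑ _w ∈ G.neighborFinset u, (n : ℤ) := Finset.sum_le_sum hper
        _ = d * n := by
            rw [Finset.sum_const, SimpleGraph.card_neighborFinset_eq_degree, nsmul_eq_mul]
        _ = n * d := mul_comm _ _
    have hsplit : ∑ i ∈ Finset.range (n + 1),
        ((∑ w ∈ G.neighborFinset u, (f (A - 1 + i) w : ℤ)) - (f (A - 1 + i) u : ℤ) * d)
        = (∑ i ∈ Finset.range (n + 1), (∑ w ∈ G.neighborFinset u, (f (A - 1 + i) w : ℤ)))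
          - (∑ i ∈ Finset.range (n + 1), (f (A - 1 + i) u : ℤ)) * d := by
      rw [Finset.sum_sub_distrib, Finset.sum_mul]
    have hcβ : d ≤ c β u := hfire β (hA1 β hAβ le_rfl)
    rw [hsplit, hfsum] at hT
    linarith

/-- building a walk from a function listing consecutive adjacent vertices -/
def mkWalk (G : SimpleGraph V) (x : ℕ → V) :
    (k : ℕ) → (∀ j, j < k → G.Adj (x j) (x (j + 1))) → G.Walk (x 0) (x k)
  | 0, _ => SimpleGraph.Walk.nil
  | (k + 1), h =>
      (mkWalk G x k (fun j hj => h j (by omega))).concat (h k (by omega))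

lemma mkWalk_length (x : ℕ → V) (k : ℕ) (h : ∀ j, j < k → G.Adj (x j) (x (j + 1))) :
    (mkWalk G x k h).length = k := by
  induction k with
  | zero => rfl
  | succ k ih => rw [mkWalk, SimpleGraph.Walk.length_concat, ih]

lemma mkWalk_support (x : ℕ → V) (k : ℕ) (h : ∀ j, j < k → G.Adj (x j) (x (j + 1))) :
    (mkWalk G x k h).support = (List.range (k + 1)).map x := by
  induction k with
  | zero => simp [mkWalk, List.range_succ]
  | succ k ih =>
      rw [mkWalk, SimpleGraph.Walk.support_concat, ih]
      simp [List.range_succ]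

lemma mkWalk_isPath (x : ℕ → V) (k : ℕ) (h : ∀ j, j < k → G.Adj (x j) (x (j + 1)))
    (hinj : ∀ i j, i ≤ k → j ≤ k → x i = x j → i = j) :
    (mkWalk G x k h).IsPath := by
  rw [SimpleGraph.Walk.isPath_def, mkWalk_support]
  apply List.Nodup.map_on _ List.nodup_range
  intro i hi j hj hxy
  exact hinj i j (by have := List.mem_range.1 hi; omega) (by have := List.mem_range.1 hj; omega) hxy

lemma dist_of_path (htree : G.IsTree) (x : ℕ → V) (k : ℕ)
    (hadj : ∀ j, j < k → G.Adj (x j) (x (j + 1)))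
    (hinj : ∀ i j, i ≤ k → j ≤ k → x i = x j → i = j) :
    G.dist (x k) (x 0) = k := by
  rw [SimpleGraph.dist_comm]
  obtain ⟨q, hq, hql⟩ := htree.isConnected.exists_path_of_dist (x 0) (x k)
  obtain ⟨P, _, hPuniq⟩ := htree.existsUnique_path (x 0) (x k)
  have h1 : q = P := hPuniq q hq
  have h2 : mkWalk G x k hadj = P := hPuniq _ (mkWalk_isPath x k hadj hinj)
  rw [← hql, h1, ← h2, mkWalk_length]

lemma no_chord (htree : G.IsTree) (x : ℕ → V) (k j : ℕ) (hjk : j + 1 < k)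
    (hadj : ∀ i, i < k → G.Adj (x i) (x (i + 1)))
    (hinj : ∀ i i', i ≤ k → i' ≤ k → x i = x i' → i = i')
    (hchord : G.Adj (x k) (x j)) : False := by
  set y : ℕ → V := fun i => x (j + i) with hy
  set K : ℕ := k - j with hK
  have hadj' : ∀ i, i < K → G.Adj (y i) (y (i + 1)) := by
    intro i hi
    have := hadj (j + i) (by omega)
    have he : j + i + 1 = j + (i + 1) := by omega
    rw [he] at this
    exact this
  have hinj' : ∀ i i', i ≤ K → i' ≤ K → y i = y i' → i = i' := by
    intro i i' h1 h2 he
    have := hinj (j + i) (j + i') (by omega) (by omega) he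
    omega
  have e1 : y 0 = x j := by simp [hy]
  have e2 : y K = x k := by
    show x (j + K) = x k
    congr 1
    omega
  set W : G.Walk (x j) (x k) := (mkWalk G y K hadj').copy e1 e2 with hW
  have hWpath : W.IsPath := (SimpleGraph.Walk.isPath_copy _ _ _).2 (mkWalk_isPath y K hadj' hinj')
  have hWlen : W.length = K := by rw [hW, SimpleGraph.Walk.length_copy, mkWalk_length]
  set W2 : G.Walk (x j) (x k) := SimpleGraph.Walk.cons hchord.symm SimpleGraph.Walk.nil with hW2
  have hW2path : W2.IsPath := by
    rw [hW2]
    apply SimpleGraph.Walk.IsPath.cons SimpleGraph.Walk.IsPath.nil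
    simp only [SimpleGraph.Walk.support_nil, List.mem_singleton]
    intro he
    have := hinj j k (by omega) (by omega) he
    omega
  have hW2len : W2.length = 1 := by rw [hW2]; simp
  obtain ⟨P, _, hPuniq⟩ := htree.existsUnique_path (x j) (x k)
  have h1 : W = P := hPuniq W hWpath
  have h2 : W2 = P := hPuniq W2 hW2path
  have : W.length = W2.length := by rw [h1, h2]
  omega

/-- Main induction: trace a clump of firing value 1 back to a motor. -/
lemma main (htree : G.IsTree) (hM : M.Nonempty) (hgame : MotorizedGame G M c f) (hp : 0 < p)
    (hperc : ∀ (t : ℤ) (v : V), c (t + p) v = c t v)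
    (hperf : ∀ (t : ℤ) (v : V), f (t + p) v = f t v)
    (v : V) (a b : ℤ) (hab : a < b) :
    ∀ (N : ℕ) (k : ℕ) (x : ℕ → V) (A : ℤ),
      x 0 = v →
      (∀ j, j < k → G.Adj (x j) (x (j + 1))) →
      (∀ i j, i ≤ k → j ≤ k → x i = x j → i = j) →
      (∀ j, j < k → ∀ t, a - (j : ℤ) ≤ t → t ≤ b - (j : ℤ) → f t (x j) = 1) →
      A ≤ a - (k : ℤ) →
      (∀ t, A ≤ t → t ≤ b - (k : ℤ) → f t (x k) = 1) →
      ((p : ℤ) - 1 - (b - (k : ℤ) - A)).toNat * (Fintype.card V + 1) + (Fintype.card V - k) ≤ N →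
      ∃ m ∈ M, ∀ t, a - (G.dist m v : ℤ) ≤ t → t ≤ b - (G.dist m v : ℤ) → f t m = 1 := by
  intro N
  induction N using Nat.strong_induction_on with
  | _ N ih =>
  intro k x A h0 hadj hinj hanc hA hwin hN
  by_cases hbig : (p : ℤ) - 1 ≤ b - (k : ℤ) - A
  · -- full period window: everyone fires always
    have hall := all_fire htree hgame hp hperc hperf (T := A) (u := x k)
      (fun i hi => hwin (A + i) (by omega) (by
        have : (i : ℤ) < p := by exact_mod_cast hi
        omega))
    obtain ⟨m, hm⟩ := hM
    exact ⟨m, hm, fun t _ _ => hall m t⟩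
  · by_cases hmem : x k ∈ M
    · refine ⟨x k, hmem, ?_⟩
      have hdist : G.dist (x k) v = k := by
        rw [← h0]; exact dist_of_path htree x k hadj hinj
      rw [hdist]
      intro t h1 h2
      exact hwin t (by omega) h2
    · have hstep := step htree hM hgame hp hperc hperf hmem
        (show A < b - (k : ℤ) by omega) hwin
      obtain ⟨w, hAdjw, hw⟩ := hstep
      set C : ℕ := Fintype.card V with hC
      have hcard : k + 1 ≤ C := by
        have h1 : (Finset.range (k + 1)).card ≤ (Finset.univ : Finset V).card := by
          apply Finset.card_le_card_of_injOn x (fun a _ => Finset.mem_univ _)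
          intro i hi j hj hij
          simp only [Finset.coe_range, Set.mem_Iio] at hi hj
          exact hinj i j (by omega) (by omega) hij
        simpa using h1
      have hE1 : 1 ≤ ((p : ℤ) - 1 - (b - (k : ℤ) - A)).toNat := by omega
      by_cases hback : 0 < k ∧ w = x (k - 1)
      · -- pop: the step went back to the previous vertex; merge windows
        obtain ⟨hk0, hweq⟩ := hback
        have hkc : ((k - 1 : ℕ) : ℤ) = (k : ℤ) - 1 := by omega
        have hμlt : ((p : ℤ) - 1 - (b - ((k - 1 : ℕ) : ℤ) - (A - 1))).toNat * (C + 1)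
            + (C - (k - 1))
            < ((p : ℤ) - 1 - (b - (k : ℤ) - A)).toNat * (C + 1) + (C - k) := by
          have hE : ((p : ℤ) - 1 - (b - ((k - 1 : ℕ) : ℤ) - (A - 1))).toNat + 1
              ≤ ((p : ℤ) - 1 - (b - (k : ℤ) - A)).toNat := by omega
          calc ((p : ℤ) - 1 - (b - ((k - 1 : ℕ) : ℤ) - (A - 1))).toNat * (C + 1) + (C - (k - 1))
              < ((p : ℤ) - 1 - (b - ((k - 1 : ℕ) : ℤ) - (A - 1))).toNat * (C + 1) + (C + 1) := by
                omega
            _ = (((p : ℤ) - 1 - (b - ((k - 1 : ℕ) : ℤ) - (A - 1))).toNat + 1) * (C + 1) := by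
                ring
            _ ≤ ((p : ℤ) - 1 - (b - (k : ℤ) - A)).toNat * (C + 1) :=
                Nat.mul_le_mul_right _ hE
            _ ≤ ((p : ℤ) - 1 - (b - (k : ℤ) - A)).toNat * (C + 1) + (C - k) :=
                Nat.le_add_right _ _
        apply ih _ (lt_of_lt_of_le hμlt hN) (k - 1) x (A - 1) h0
          (fun j hj => hadj j (by omega))
          (fun i j hi hj => hinj i j (by omega) (by omega))
          (fun j hj => hanc j (by omega))
          (by omega)
          ?_ le_rfl
        intro t h1 h2
        rcases le_or_gt t (b - (k : ℤ) - 1) with h | h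
        · have := hw t (by omega) (by omega)
          rwa [hweq] at this
        · exact hanc (k - 1) (by omega) t (by omega) (by omega)
      · -- push: fresh vertex w
        have hwfresh : ∀ j, j ≤ k → w ≠ x j := by
          intro j hj heq
          rcases Nat.lt_or_ge (j + 1) k with hlt | hge
          · exact no_chord htree x k j hlt hadj hinj (heq ▸ hAdjw)
          · rcases Nat.eq_or_lt_of_le hj with hjeq | hjlt
            · exact hAdjw.ne' (by rw [heq, hjeq])
            · -- j = k - 1 and k > 0
              have hj1 : j = k - 1 := by omega
              have hk0 : 0 < k := by omega
              exact hback ⟨hk0, by rw [hj1] at heq; exact heq⟩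
        set x' : ℕ → V := fun i => if i ≤ k then x i else w with hx'
        have hx'le : ∀ i, i ≤ k → x' i = x i := fun i hi => by simp [hx', hi]
        have hx'succ : x' (k + 1) = w := by simp [hx']
        have hμlt : ((p : ℤ) - 1 - (b - ((k + 1 : ℕ) : ℤ) - (A - 1))).toNat * (C + 1)
            + (C - (k + 1))
            < ((p : ℤ) - 1 - (b - (k : ℤ) - A)).toNat * (C + 1) + (C - k) := by
          have hEeq : ((p : ℤ) - 1 - (b - ((k + 1 : ℕ) : ℤ) - (A - 1))).toNat
              = ((p : ℤ) - 1 - (b - (k : ℤ) - A)).toNat := by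
            congr 1
            push_cast
            ring
          rw [hEeq]
          omega
        apply ih _ (lt_of_lt_of_le hμlt hN) (k + 1) x' (A - 1) (by rw [hx'le 0 (by omega)]; exact h0)
          ?_ ?_ ?_ (by push_cast; omega) ?_ le_rfl
        · -- adjacency
          intro j hj
          rcases Nat.lt_or_ge j k with h | h
          · rw [hx'le j (by omega), hx'le (j + 1) (by omega)]
            exact hadj j h
          · have hjk : j = k := by omega
            rw [hjk, hx'le k le_rfl, hx'succ]
            exact hAdjw
        · -- injectivity
          intro i j hi hj hij
          rcases Nat.lt_or_ge i (k + 1) with h1 | h1 <;> rcases Nat.lt_or_ge j (k + 1) with h2 | h2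
          · rw [hx'le i (by omega), hx'le j (by omega)] at hij
            exact hinj i j (by omega) (by omega) hij
          · have hj1 : j = k + 1 := by omega
            rw [hx'le i (by omega), hj1, hx'succ] at hij
            exact absurd hij.symm (hwfresh i (by omega))
          · have hi1 : i = k + 1 := by omega
            rw [hi1, hx'succ, hx'le j (by omega)] at hij
            exact absurd hij (hwfresh j (by omega))
          · omega
        · -- ancestors
          intro j hj t h1 h2
          rcases Nat.lt_or_ge j k with h | h
          · rw [hx'le j (by omega)]
            exact hanc j h t h1 h2
          · have hjk : j = k := by omega
            rw [hjk, hx'le k le_rfl]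
            subst hjk
            exact hwin t (by omega) h2
        · -- window for new vertex
          intro t h1 h2
          rw [hx'succ]
          apply hw t (by omega)
          push_cast at h2 ⊢
          omega

end ClumpProof

/-- In a periodic motorized game on a tree, every clump `[a,b]` of constant firing
value of a vertex is supported by a motor `m` on `[a−D, b−D]`, where `D` is the
distance from `m` to `v`. -/
theorem clump_traces_to_motor {V : Type*} [Fintype V] (G : SimpleGraph V)
    [DecidableRel G.Adj] (htree : G.IsTree) (M : Set V) (hM : M.Nonempty)
    (c : ℤ → V → ℤ) (f : ℤ → V → ℕ) (hgame : MotorizedGame G M c f)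
    (p : ℕ) (hp : 0 < p)
    (hperc : ∀ (t : ℤ) (v : V), c (t + p) v = c t v)
    (hperf : ∀ (t : ℤ) (v : V), f (t + p) v = f t v)
    (v : V) (fv : ℕ) (hfv : fv = 0 ∨ fv = 1) (a b : ℤ) (hab : a < b)
    (hconst : ∀ t, a ≤ t → t ≤ b → f t v = fv) :
    ∃ m ∈ M, ∀ t, a - (G.dist m v : ℤ) ≤ t → t ≤ b - (G.dist m v : ℤ) →
      f t m = fv := by
  have hbin := hgame.1
  rcases hfv with hfv | hfv
  · -- fv = 0 : use the dual game
    subst hfv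
    set c' : ℤ → V → ℤ := fun t y => 2 * (G.degree y : ℤ) - 1 - c t y with hc'
    set f' : ℤ → V → ℕ := fun t y => 1 - f t y with hf'
    have hcast : ∀ (t : ℤ) (w : V), ((f' t w : ℕ) : ℤ) = 1 - (f t w : ℤ) := by
      intro t w; rcases hbin t w with h | h <;> simp [hf', h]
    have hgame' : MotorizedGame G M c' f' := by
      refine ⟨fun t y => ?_, fun t y hy => ?_, fun t y => ?_⟩
      · rcases hbin t y with h | h <;> simp [hf', h]
      · have hr := hgame.2.1 t y hy
        by_cases hc : (G.degree y : ℤ) ≤ c t y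
        · rw [if_pos hc] at hr
          rw [if_neg (show ¬((G.degree y : ℤ) ≤ c' t y) by simp only [hc']; omega)]
          simp [hf', hr]
        · rw [if_neg hc] at hr
          rw [if_pos (show (G.degree y : ℤ) ≤ c' t y by simp only [hc']; omega)]
          simp [hf', hr]
      · have hu := hgame.2.2 t y
        have hsum : ∑ w ∈ G.neighborFinset y, ((f' t w : ℕ) : ℤ)
            = (G.degree y : ℤ) - ∑ w ∈ G.neighborFinset y, (f t w : ℤ) := by
          rw [Finset.sum_congr rfl (fun w _ => hcast t w), Finset.sum_sub_distrib]
          rw [Finset.sum_const, SimpleGraph.card_neighborFinset_eq_degree, nsmul_eq_mul]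
          ring
        simp only [hc']
        rw [hsum, hcast t y]
        linarith
    have hperc' : ∀ (t : ℤ) (y : V), c' (t + p) y = c' t y := by
      intro t y; simp only [hc', hperc]
    have hperf' : ∀ (t : ℤ) (y : V), f' (t + p) y = f' t y := by
      intro t y; simp only [hf', hperf]
    have hconst' : ∀ t, a ≤ t → t ≤ b → f' t v = 1 := by
      intro t h1 h2; simp [hf', hconst t h1 h2]
    obtain ⟨m, hm, hmw⟩ := ClumpProof.main htree hM hgame' hp hperc' hperf' v a b hab
      (((p : ℤ) - 1 - (b - (0 : ℤ) - a)).toNat * (Fintype.card V + 1) + (Fintype.card V - 0))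
      0 (fun _ => v) a rfl (by omega) (fun i j _ _ _ => by omega)
      (by omega) (by omega) (fun t h1 h2 => hconst' t (by simpa using h1) (by simpa using h2))
      le_rfl
    refine ⟨m, hm, fun t h1 h2 => ?_⟩
    have := hmw t h1 h2
    rcases hbin t m with h | h
    · exact h
    · exfalso; rw [hf'] at this; simp [h] at this
  · subst hfv
    obtain ⟨m, hm, hmw⟩ := ClumpProof.main htree hM hgame hp hperc hperf v a b hab
      (((p : ℤ) - 1 - (b - (0 : ℤ) - a)).toNat * (Fintype.card V + 1) + (Fintype.card V - 0))
      0 (fun _ => v) a rfl (by omega) (fun i j _ _ _ => by omega)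
      (by omega) (by omega) (fun t h1 h2 => hconst t (by simpa using h1) (by simpa using h2))
      le_rfl
    exact ⟨m, hm, hmw⟩
end

section
/- For any two cyclic binary strings p, q of length n, the sum M(p,q) = Σ_{i=0}^{n−1} ( s_i(p)(p_i − q_{i−1}) + s_i(q)(q_i − p_{i−1}) − δ_i(p) − δ_i(q) ) is nonnegative, where s_i and δ_i are defined via the sector decomposition. -/
open Finset

/-- `s` is the sector-sign function of the `n`-periodic binary string `p`:
`s i = 1` on 1-sectors and `s i = −1` on 0-sectors. Characterization: `s` is
`n`-periodic, `±1`-valued, equals the sign of `p i` whenever `p i = p (i−1)`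
(two consecutive equal values lie in a sector of that type), and changes value
between `i` and `i+1` exactly at sector boundaries, i.e. when `p i = p (i−1)` and
`p (i+1) ≠ p i`. (For purely alternating strings `s` is constant of either sign.) -/
def IsSectorSign (n : ℕ) (p : ℤ → Bool) (s : ℤ → ℤ) : Prop :=
  (∀ i, s (i + n) = s i) ∧ (∀ i, s i = 1 ∨ s i = -1) ∧
  (∀ i, p i = p (i - 1) → s i = if p i then 1 else -1) ∧
  (∀ i, s (i + 1) ≠ s i ↔ (p i = p (i - 1) ∧ p (i + 1) ≠ p i))

/-- The value of a binary digit as an integer. -/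
def bval (b : Bool) : ℤ := if b then 1 else 0


def Phi : Bool → Bool → Bool → Bool → Bool → Bool → ℤ
  | false, false, false, true, false, true => -1
  | false, false, true, false, false, true => -2
  | false, false, true, false, false, false => -1
  | false, false, true, true, false, true => -2
  | false, true, false, false, true, false => -1
  | false, true, false, true, true, true => -2
  | false, true, false, true, true, false => -1
  | false, true, false, true, false, true => -1
  | false, true, true, false, true, true => -1
  | false, true, true, false, true, false => -2
  | false, true, true, false, false, true => -2
  | false, true, true, false, false, false => -1
  | false, true, true, true, true, true => -1
  | false, true, true, true, false, true => -2
  | true, false, false, false, true, false => -2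
  | true, false, false, false, false, false => -1
  | true, false, false, true, true, true => -1
  | true, false, false, true, true, false => -2
  | true, false, false, true, false, true => -2
  | true, false, false, true, false, false => -1
  | true, false, true, false, true, false => -1
  | true, false, true, false, false, true => -1
  | true, false, true, false, false, false => -2
  | true, false, true, true, false, true => -1
  | true, true, false, false, true, false => -2
  | true, true, false, true, true, true => -1
  | true, true, false, true, true, false => -2
  | true, true, true, false, true, false => -1
  | _, _, _, _, _, _ => 0

lemma step (pm pc pp qm qc qp : Bool) (sp sq sp' sq' : ℤ)
    (h1 : sp = 1 ∨ sp = -1) (h2 : sq = 1 ∨ sq = -1)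
    (h3 : sp' = 1 ∨ sp' = -1) (h4 : sq' = 1 ∨ sq' = -1)
    (hp3 : pc = pm → sp = if pc then 1 else -1)
    (hq3 : qc = qm → sq = if qc then 1 else -1)
    (hp3' : pp = pc → sp' = if pp then 1 else -1)
    (hq3' : qp = qc → sq' = if qp then 1 else -1)
    (hp4 : sp' ≠ sp ↔ (pc = pm ∧ pp ≠ pc))
    (hq4 : sq' ≠ sq ↔ (qc = qm ∧ qp ≠ qc)) :
    Phi pc pp qc qp (sp' == 1) (sq' == 1) - Phi pm pc qm qc (sp == 1) (sq == 1) ≤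
      sp * (bval pc - bval qm) + sq * (bval qc - bval pm)
        - (if sp' = sp then 0 else 1) - (if sq' = sq then 0 else 1) := by
  rcases h1 with rfl | rfl <;> rcases h2 with rfl | rfl <;>
    rcases h3 with rfl | rfl <;> rcases h4 with rfl | rfl <;>
    (revert hp3 hq3 hp3' hq3' hp4 hq4; revert pm pc pp qm qc qp; decide)

/-- For any two cyclic binary strings `p, q` of length `n`, the signed sum
`M(p,q) = Σ_i (s_i(p)(p_i − q_{i−1}) + s_i(q)(q_i − p_{i−1}) − δ_i(p) − δ_i(q))`
is nonnegative, where `δ_i` indicates a sector switch between `i` and `i+1`. -/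
theorem signed_sector_sum_nonneg (n : ℕ) (hn : 1 ≤ n) (p q : ℤ → Bool)
    (hp : ∀ i, p (i + n) = p i) (hq : ∀ i, q (i + n) = q i)
    (sp sq : ℤ → ℤ) (hsp : IsSectorSign n p sp) (hsq : IsSectorSign n q sq) :
    0 ≤ ∑ i ∈ range n,
        (sp i * (bval (p i) - bval (q (i - 1)))
          + sq i * (bval (q i) - bval (p (i - 1)))
          - (if sp (i + 1) = sp i then 0 else 1)
          - (if sq (i + 1) = sq i then 0 else 1)) := by
  obtain ⟨hsp1, hsp2, hsp3, hsp4⟩ := hsp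
  obtain ⟨hsq1, hsq2, hsq3, hsq4⟩ := hsq
  set F : ℕ → ℤ := fun i =>
    Phi (p ((i : ℤ) - 1)) (p i) (q ((i : ℤ) - 1)) (q i) (sp i == 1) (sq i == 1) with hF
  have key : ∀ i ∈ range n,
      F (i + 1) - F i ≤
        (sp i * (bval (p i) - bval (q (i - 1)))
          + sq i * (bval (q i) - bval (p (i - 1)))
          - (if sp (i + 1) = sp i then 0 else 1)
          - (if sq (i + 1) = sq i then 0 else 1)) := by
    intro i _
    have hc : ((i + 1 : ℕ) : ℤ) = (i : ℤ) + 1 := by push_cast; ring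
    have hc2 : ((i + 1 : ℕ) : ℤ) - 1 = (i : ℤ) := by push_cast; ring
    have := step (p ((i : ℤ) - 1)) (p i) (p ((i : ℤ) + 1)) (q ((i : ℤ) - 1)) (q i)
      (q ((i : ℤ) + 1)) (sp i) (sq i) (sp ((i : ℤ) + 1)) (sq ((i : ℤ) + 1))
      (hsp2 i) (hsq2 i) (hsp2 _) (hsq2 _)
      (hsp3 i) (hsq3 i)
      (by have h := hsp3 ((i : ℤ) + 1); rwa [add_sub_cancel_right] at h)
      (by have h := hsq3 ((i : ℤ) + 1); rwa [add_sub_cancel_right] at h)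
      (hsp4 i) (hsq4 i)
    simpa [hF, hc, hc2] using this
  calc (0 : ℤ) = F n - F 0 := by
        have h1 : p ((n : ℤ)) = p 0 := by simpa using hp 0
        have h2 : p ((n : ℤ) - 1) = p ((0 : ℤ) - 1) := by
          rw [show ((n : ℤ) - 1) = -1 + n by ring, show ((0 : ℤ) - 1) = -1 by ring]
          exact hp (-1)
        have h3 : q ((n : ℤ)) = q 0 := by simpa using hq 0
        have h4 : q ((n : ℤ) - 1) = q ((0 : ℤ) - 1) := by
          rw [show ((n : ℤ) - 1) = -1 + n by ring, show ((0 : ℤ) - 1) = -1 by ring]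
          exact hq (-1)
        have h5 : sp ((n : ℤ)) = sp 0 := by simpa using hsp1 0
        have h6 : sq ((n : ℤ)) = sq 0 := by simpa using hsq1 0
        simp [hF, h1, h2, h3, h4, h5, h6]
    _ = ∑ i ∈ range n, (F (i + 1) - F i) := (Finset.sum_range_sub F n).symm
    _ ≤ _ := Finset.sum_le_sum key
end
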